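/- Let {x_k}, {τ_k}, {A_k} be generated by the TRFD algorithm, assume each component F_i is convex, h is monotone, f has a global minimizer x* on Ω with D_0 := sup{‖x − x*‖_p : x ∈ Ω, f(x) ≤ f(x_0)} < ∞, and Δ_* ≥ D_0. Then for every iteration k with η_{p,Δ_*}(x_k;A_k) ≥ ε/2 (i.e. k ∉ U¹), one has η_{p,Δ_*}(x_k;A_k) ≥ (f(x_k) − f(x*)) / ((L_J/σ + 1) Δ_*). -/

import Mathlib

open scoped ENNReal

noncomputable section

/-- The `p`-norm on `ℝ^n`, for `p ∈ [1,∞]`. -/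
def pNorm (p : ℝ≥0∞) {n : ℕ} (x : Fin n → ℝ) : ℝ :=
  if p = ∞ then ⨆ i, |x i| else (∑ i, |x i| ^ p.toReal) ^ (1 / p.toReal)

/-- The Euclidean norm on `ℝ^n`. -/
def eucNorm {n : ℕ} (x : Fin n → ℝ) : ℝ := Real.sqrt (∑ i, x i ^ 2)

/-- The operator norm of a matrix, induced by Euclidean norms. -/
def opNorm2 {m n : ℕ} (A : Matrix (Fin m) (Fin n) ℝ) : ℝ :=
  sSup ((fun v => eucNorm (A.mulVec v)) '' {v | eucNorm v ≤ 1})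

/-- Forward finite-difference approximation of the Jacobian of `F` at `x` with stepsize `τ`:
the `j`-th column is `(F (x + τ e_j) - F x) / τ`. -/
def fdMatrix {n m : ℕ} (F : (Fin n → ℝ) → (Fin m → ℝ)) (x : Fin n → ℝ) (τ : ℝ) :
    Matrix (Fin m) (Fin n) ℝ :=
  Matrix.of fun i j => (F (x + Pi.single j τ) i - F x i) / τ


section Aux

lemma eucNorm_eq_norm {k : ℕ} (v : Fin k → ℝ) :
    eucNorm v = ‖(WithLp.equiv 2 (Fin k → ℝ)).symm v‖ := by
  rw [EuclideanSpace.norm_eq]; simp [eucNorm, sq_abs]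

lemma eucNorm_nonneg {k : ℕ} (v : Fin k → ℝ) : 0 ≤ eucNorm v := Real.sqrt_nonneg _

lemma eucNorm_zero {k : ℕ} : eucNorm (0 : Fin k → ℝ) = 0 := by simp [eucNorm]

lemma eucNorm_add_le {k : ℕ} (a b : Fin k → ℝ) :
    eucNorm (a + b) ≤ eucNorm a + eucNorm b := by
  simp only [eucNorm_eq_norm]
  exact norm_add_le ((WithLp.equiv 2 (Fin k → ℝ)).symm a) ((WithLp.equiv 2 (Fin k → ℝ)).symm b)

lemma eucNorm_smul {k : ℕ} (c : ℝ) (v : Fin k → ℝ) :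
    eucNorm (c • v) = |c| * eucNorm v := by
  simp only [eucNorm_eq_norm]
  rw [show (WithLp.equiv 2 (Fin k → ℝ)).symm (c • v)
      = c • (WithLp.equiv 2 (Fin k → ℝ)).symm v from rfl]
  rw [norm_smul]; simp [Real.norm_eq_abs]

lemma eucNorm_sum_le {k : ℕ} {ι : Type*} (s : Finset ι) (g : ι → (Fin k → ℝ)) :
    eucNorm (∑ l ∈ s, g l) ≤ ∑ l ∈ s, eucNorm (g l) := by
  classical
  induction s using Finset.induction with
  | empty => simp [eucNorm_zero]
  | @insert _ _ hne ih =>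
      rw [Finset.sum_insert hne, Finset.sum_insert hne]
      exact (eucNorm_add_le _ _).trans (by linarith)

lemma eucNorm_mono {k : ℕ} {a b : Fin k → ℝ} (h : ∀ i, |a i| ≤ |b i|) :
    eucNorm a ≤ eucNorm b := by
  apply Real.sqrt_le_sqrt
  apply Finset.sum_le_sum
  intro i _
  rw [← sq_abs (a i), ← sq_abs (b i)]
  exact pow_le_pow_left₀ (abs_nonneg _) (h i) 2

lemma sum_abs_le_sqrt {k : ℕ} (s : Fin k → ℝ) :
    ∑ j, |s j| ≤ Real.sqrt k * eucNorm s := by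
  have h2 := Finset.sum_mul_sq_le_sq_mul_sq Finset.univ (fun _ : Fin k => (1:ℝ)) (fun j => |s j|)
  simp only [one_mul, one_pow, sq_abs] at h2
  have h3 : ∑ j, |s j| = Real.sqrt ((∑ j, |s j|) ^ 2) := by
    rw [Real.sqrt_sq (Finset.sum_nonneg fun j _ => abs_nonneg _)]
  rw [h3, eucNorm, ← Real.sqrt_mul (by positivity)]
  apply Real.sqrt_le_sqrt
  simpa using h2

def frobNorm {m n : ℕ} (A : Matrix (Fin m) (Fin n) ℝ) : ℝ :=
  Real.sqrt (∑ i, ∑ j, A i j ^ 2)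

lemma eucNorm_mulVec_le_frob {m n : ℕ} (A : Matrix (Fin m) (Fin n) ℝ) (s : Fin n → ℝ) :
    eucNorm (A.mulVec s) ≤ frobNorm A * eucNorm s := by
  rw [eucNorm, frobNorm, eucNorm, ← Real.sqrt_mul (by positivity)]
  apply Real.sqrt_le_sqrt
  rw [Finset.sum_mul]
  apply Finset.sum_le_sum
  intro i _
  have := Finset.sum_mul_sq_le_sq_mul_sq Finset.univ (fun j => A i j) s
  simpa [Matrix.mulVec, dotProduct] using this

lemma eucNorm_mulVec_le_opNorm2 {m n : ℕ} (A : Matrix (Fin m) (Fin n) ℝ)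
    (v : Fin n → ℝ) (hv : eucNorm v ≤ 1) :
    eucNorm (A.mulVec v) ≤ opNorm2 A := by
  apply le_csSup
  · refine ⟨frobNorm A, ?_⟩
    rintro y ⟨w, hw, rfl⟩
    calc eucNorm (A.mulVec w) ≤ frobNorm A * eucNorm w := eucNorm_mulVec_le_frob A w
    _ ≤ frobNorm A * 1 := mul_le_mul_of_nonneg_left hw (Real.sqrt_nonneg _)
    _ = frobNorm A := mul_one _
  · exact ⟨v, hv, rfl⟩

lemma pNorm_zero {k : ℕ} (hk : 0 < k) {p : ℝ≥0∞} (hp : 1 ≤ p) :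
    pNorm p (0 : Fin k → ℝ) = 0 := by
  have : Nonempty (Fin k) := ⟨⟨0, hk⟩⟩
  rcases eq_or_ne p ∞ with hpi | hpi
  · simp [pNorm, hpi, ciSup_const]
  · have ht : 0 < p.toReal := ENNReal.toReal_pos (by intro h0; rw [h0] at hp; simp at hp) hpi
    simp only [pNorm, hpi, if_false]
    rw [show ∑ i : Fin k, |(0 : Fin k → ℝ) i| ^ p.toReal = 0 by
      simp [Real.zero_rpow ht.ne']]
    exact Real.zero_rpow (by positivity)

lemma pNorm_neg {k : ℕ} (p : ℝ≥0∞) (v : Fin k → ℝ) : pNorm p (-v) = pNorm p v := by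
  simp [pNorm, abs_neg]

lemma eucNorm_single {k : ℕ} (j : Fin k) : eucNorm (Pi.single j 1 : Fin k → ℝ) = 1 := by
  have : ∑ i, ((Pi.single j 1 : Fin k → ℝ) i)^2 = 1 := by
    rw [Finset.sum_eq_single j]
    · simp
    · intro b _ hb; simp [Pi.single_apply, hb]
    · simp
  rw [eucNorm, this, Real.sqrt_one]

lemma sum_range_gauss (N : ℕ) : ∑ l ∈ Finset.range N, ((l:ℝ)+1) = N*(N+1)/2 := by
  induction N with
  | zero => simp
  | succ k ih => rw [Finset.sum_range_succ, ih]; push_cast; ring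

lemma convexOn_line {n : ℕ} (f : (Fin n → ℝ) → ℝ) (hf : ConvexOn ℝ Set.univ f)
    (x s : Fin n → ℝ) : ConvexOn ℝ Set.univ (fun t : ℝ => f (x + t • s)) := by
  have h := hf.comp_affineMap (AffineMap.lineMap (x : Fin n → ℝ) (x + s))
  have harg : ∀ t : ℝ, (AffineMap.lineMap (x : Fin n → ℝ) (x + s)) t = x + t • s := by
    intro t
    simp only [AffineMap.lineMap_apply, vsub_eq_sub, vadd_eq_add]
    module
  have heq : (fun t : ℝ => f (x + t • s))
      = (f ∘ (AffineMap.lineMap (x : Fin n → ℝ) (x + s))) := by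
    funext t
    rw [Function.comp_apply, harg t]
  rw [heq]
  simpa using h

lemma deriv_line {n m : ℕ} {F : (Fin n → ℝ) → (Fin m → ℝ)}
    {J : (Fin n → ℝ) → Matrix (Fin m) (Fin n) ℝ}
    (hJ : ∀ y, HasFDerivAt F (LinearMap.toContinuousLinearMap (Matrix.mulVecLin (J y))) y)
    (x s : Fin n → ℝ) (i : Fin m) (t : ℝ) :
    HasDerivAt (fun t : ℝ => F (x + t • s) i) ((J (x + t • s)).mulVec s i) t := by
  have hline : HasDerivAt (fun t : ℝ => x + t • s) s t := by
    simpa using ((hasDerivAt_id t).smul_const s).const_add x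
  have h1 : HasDerivAt (fun t : ℝ => F (x + t • s)) ((J (x + t • s)).mulVec s) t := by
    simpa [Function.comp_def] using (hJ (x + t • s)).comp_hasDerivAt t hline
  simpa [Function.comp_def] using (ContinuousLinearMap.proj (R := ℝ)
    (φ := fun _ : Fin m => ℝ) i).hasFDerivAt.comp_hasDerivAt t h1

lemma tangent_le {n m : ℕ} {F : (Fin n → ℝ) → (Fin m → ℝ)}
    {J : (Fin n → ℝ) → Matrix (Fin m) (Fin n) ℝ}
    (hJ : ∀ y, HasFDerivAt F (LinearMap.toContinuousLinearMap (Matrix.mulVecLin (J y))) y)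
    (hFconv : ∀ i, ConvexOn ℝ Set.univ (fun y => F y i))
    (x s : Fin n → ℝ) (i : Fin m) :
    F x i + (J x).mulVec s i ≤ F (x + s) i := by
  have hconv := convexOn_line _ (hFconv i) x s
  have hsl := hconv.le_slope_of_hasDerivAt (Set.mem_univ (0:ℝ)) (Set.mem_univ (1:ℝ))
    one_pos (deriv_line hJ x s i 0)
  rw [slope_def_field] at hsl
  simp only [zero_smul, add_zero, one_smul, sub_zero, div_one] at hsl
  linarith

lemma slope_upper {n m : ℕ} {F : (Fin n → ℝ) → (Fin m → ℝ)}
    {J : (Fin n → ℝ) → Matrix (Fin m) (Fin n) ℝ}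
    (hJ : ∀ y, HasFDerivAt F (LinearMap.toContinuousLinearMap (Matrix.mulVecLin (J y))) y)
    (hFconv : ∀ i, ConvexOn ℝ Set.univ (fun y => F y i))
    (x s : Fin n → ℝ) (i : Fin m) {a b : ℝ} (hab : a < b) :
    F (x + b • s) i - F (x + a • s) i ≤ (b - a) * (J (x + b • s)).mulVec s i := by
  have hconv := convexOn_line _ (hFconv i) x s
  have hsl := hconv.slope_le_of_hasDerivAt (Set.mem_univ a) (Set.mem_univ b)
    hab (deriv_line hJ x s i b)
  rw [slope_def_field] at hsl
  rw [div_le_iff₀ (by linarith)] at hsl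
  linarith

/-- Error of one column of the finite-difference Jacobian. -/
lemma fd_col_err {n m : ℕ} {F : (Fin n → ℝ) → (Fin m → ℝ)}
    {J : (Fin n → ℝ) → Matrix (Fin m) (Fin n) ℝ}
    (hJ : ∀ y, HasFDerivAt F (LinearMap.toContinuousLinearMap (Matrix.mulVecLin (J y))) y)
    (hFconv : ∀ i, ConvexOn ℝ Set.univ (fun y => F y i))
    {LJ : ℝ} (hLJ : 0 < LJ)
    (hJLip : ∀ y z, opNorm2 (J y - J z) ≤ LJ * eucNorm (y - z))
    (x : Fin n → ℝ) {τ : ℝ} (hτ : 0 < τ) (j : Fin n) :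
    eucNorm (fun i => fdMatrix F x τ i j - J x i j) ≤ LJ * τ / 2 := by
  set ej : Fin n → ℝ := Pi.single j 1 with hej
  have hsingle : Pi.single j τ = τ • ej := by
    funext i
    simp [hej, Pi.single_apply, mul_ite]
  have hmve : ∀ B : Matrix (Fin m) (Fin n) ℝ, ∀ i, B.mulVec ej i = B i j := by
    intro B i
    simp [hej, Matrix.mulVec_single]
  set c : ℝ → (Fin m → ℝ) := fun t => (J (x + t • ej)).mulVec ej with hcdef
  have hc0 : c 0 = (J x).mulVec ej := by simp [hcdef]
  have hcLip : ∀ t : ℝ, 0 ≤ t → eucNorm (c t - c 0) ≤ LJ * t := by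
    intro t ht
    have h1 : c t - c 0 = (J (x + t • ej) - J x).mulVec ej := by
      rw [hc0, hcdef, Matrix.sub_mulVec]
    rw [h1]
    have h2 := eucNorm_mulVec_le_opNorm2 (J (x + t • ej) - J x) ej (le_of_eq (eucNorm_single j))
    have h3 := hJLip (x + t • ej) x
    have h4 : eucNorm (x + t • ej - x) = t := by
      rw [show x + t • ej - x = t • ej by abel, eucNorm_smul, eucNorm_single,
        abs_of_nonneg ht, mul_one]
    rw [h4] at h3
    linarith
  set err : Fin m → ℝ := fun i => fdMatrix F x τ i j - J x i j with herrdef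
  have herr : ∀ i, err i = (F (x + τ • ej) i - F x i)/τ - c 0 i := by
    intro i
    rw [herrdef, hc0]
    simp only [fdMatrix, Matrix.of_apply, hsingle, hmve]
  -- lower bound: 0 ≤ err i
  have hc0i : ∀ i, c 0 i = (J x).mulVec ej i := fun i => by rw [hc0]
  have hlb : ∀ i, 0 ≤ err i := by
    intro i
    have h6 := tangent_le hJ hFconv x (τ • ej) i
    rw [Matrix.mulVec_smul] at h6
    simp only [Pi.smul_apply, smul_eq_mul] at h6
    rw [herr i, le_sub_iff_add_le, zero_add, le_div_iff₀ hτ, hc0i i]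
    linarith
  -- partition bound
  have hpart : ∀ N : ℕ, 0 < N → eucNorm err ≤ LJ * τ * ((N:ℝ)+1)/(2*N) := by
    intro N hN
    have hNR : (0:ℝ) < N := by exact_mod_cast hN
    set u : Fin m → ℝ :=
      (N:ℝ)⁻¹ • ∑ l ∈ Finset.range N, (c (((l:ℝ)+1)*τ/N) - c 0) with hudef
    have hub : ∀ i, err i ≤ u i := by
      intro i
      have htel : F (x + τ • ej) i - F x i
          = ∑ l ∈ Finset.range N, (F (x + (((l:ℝ)+1)*τ/N) • ej) i
              - F (x + ((l:ℝ)*τ/N) • ej) i) := by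
        have := Finset.sum_range_sub (fun l : ℕ => F (x + ((l:ℝ)*τ/N) • ej) i) N
        have hNτ : ((N:ℝ)*τ/N) = τ := by field_simp
        have h0τ : ((0:ℕ):ℝ)*τ/N = 0 := by simp
        rw [hNτ] at this
        simp only [h0τ, zero_smul, add_zero] at this
        rw [← this]
        apply Finset.sum_congr rfl
        intro l _
        push_cast
        ring_nf
      have hterm : ∀ l ∈ Finset.range N,
          F (x + (((l:ℝ)+1)*τ/N) • ej) i - F (x + ((l:ℝ)*τ/N) • ej) i
            ≤ (τ/N) * c (((l:ℝ)+1)*τ/N) i := by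
        intro l _
        have hab : (l:ℝ)*τ/N < ((l:ℝ)+1)*τ/N := by
          rw [div_lt_div_iff_of_pos_right hNR]
          nlinarith
        have h7 := slope_upper hJ hFconv x ej i hab
        have hba : ((l:ℝ)+1)*τ/N - (l:ℝ)*τ/N = τ/N := by ring
        rw [hba] at h7
        exact h7
      have hsum : F (x + τ • ej) i - F x i
          ≤ (τ/N) * ∑ l ∈ Finset.range N, c (((l:ℝ)+1)*τ/N) i := by
        rw [htel, Finset.mul_sum]
        exact Finset.sum_le_sum hterm
      have hui : u i = (N:ℝ)⁻¹ * (∑ l ∈ Finset.range N, c (((l:ℝ)+1)*τ/N) i)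
          - c 0 i := by
        rw [hudef]
        simp only [Pi.smul_apply, smul_eq_mul, Finset.sum_apply, Pi.sub_apply]
        rw [Finset.sum_sub_distrib, Finset.sum_const, Finset.card_range, nsmul_eq_mul]
        field_simp
        congr 1
        exact Finset.sum_congr rfl fun l _ => by rw [mul_comm τ]
      rw [herr i, hui]
      apply sub_le_sub_right
      rw [div_le_iff₀ hτ]
      calc F (x + τ • ej) i - F x i
          ≤ (τ/N) * ∑ l ∈ Finset.range N, c (((l:ℝ)+1)*τ/N) i := hsum
        _ = (N:ℝ)⁻¹ * (∑ l ∈ Finset.range N, c (((l:ℝ)+1)*τ/N) i) * τ := by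
            field_simp
    have h8 : eucNorm err ≤ eucNorm u := by
      apply eucNorm_mono
      intro i
      rw [abs_of_nonneg (hlb i), abs_of_nonneg ((hlb i).trans (hub i))]
      exact hub i
    have h9 : eucNorm u ≤ (N:ℝ)⁻¹ * ∑ l ∈ Finset.range N, (LJ*(((l:ℝ)+1)*τ/N)) := by
      rw [hudef, eucNorm_smul, abs_of_nonneg (by positivity : (0:ℝ) ≤ (N:ℝ)⁻¹)]
      apply mul_le_mul_of_nonneg_left _ (by positivity)
      exact (eucNorm_sum_le _ _).trans (Finset.sum_le_sum fun l _ =>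
        hcLip (((l:ℝ)+1)*τ/N) (by positivity))
    have h10 : ∑ l ∈ Finset.range N, (LJ*(((l:ℝ)+1)*τ/N))
        = LJ*τ/N*((N:ℝ)*((N:ℝ)+1)/2) := by
      rw [show ∑ l ∈ Finset.range N, (LJ*(((l:ℝ)+1)*τ/N))
          = ∑ l ∈ Finset.range N, (LJ*τ/N)*((l:ℝ)+1) from
        Finset.sum_congr rfl fun l _ => by ring]
      rw [← Finset.mul_sum, sum_range_gauss]
    have h11 : (N:ℝ)⁻¹ * (LJ*τ/N*((N:ℝ)*((N:ℝ)+1)/2)) = LJ * τ * ((N:ℝ)+1)/(2*N) := by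
      field_simp
    rw [h10, h11] at h9
    linarith
  -- pass to the limit in N
  by_contra hcon
  push_neg at hcon
  set δ := eucNorm err - LJ*τ/2 with hδ
  have hδpos : 0 < δ := by simp only [hδ]; linarith
  obtain ⟨N, hNgt⟩ := exists_nat_gt (LJ*τ/(2*δ))
  have h := hpart (N+1) (Nat.succ_pos N)
  push_cast at h
  have hNR : (0:ℝ) < (N:ℝ)+1 := by positivity
  have key : LJ*τ/(2*((N:ℝ)+1)) < δ := by
    rw [div_lt_iff₀ (by positivity)]
    have h12 : LJ*τ/(2*δ) < (N:ℝ)+1 := lt_trans hNgt (by linarith)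
    rw [div_lt_iff₀ (by positivity)] at h12
    nlinarith
  have hid : LJ*τ*(((N:ℝ)+1)+1)/(2*((N:ℝ)+1))
      = LJ*τ/2 + LJ*τ/(2*((N:ℝ)+1)) := by
    field_simp
  rw [hid] at h
  simp only [hδ] at key
  linarith

lemma model_bddBelow {n m : ℕ} (Ω : Set (Fin n → ℝ)) (F : (Fin n → ℝ) → (Fin m → ℝ))
    (h : (Fin m → ℝ) → ℝ) (p : ℝ≥0∞) {Lh cpm cnp : ℝ}
    (hLh : 0 ≤ Lh) (hcpm0 : 0 ≤ cpm) (hcnp0 : 0 ≤ cnp)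
    (hhLip : ∀ z w, |h z - h w| ≤ Lh * pNorm p (z - w))
    (hcpm : ∀ z : Fin m → ℝ, pNorm p z ≤ cpm * eucNorm z)
    (hcnp : ∀ v : Fin n → ℝ, eucNorm v ≤ cnp * pNorm p v)
    (x : Fin n → ℝ) (A : Matrix (Fin m) (Fin n) ℝ) (r : ℝ) :
    BddBelow ((fun s => h (F x + A.mulVec s)) '' {s | x + s ∈ Ω ∧ pNorm p s ≤ r}) := by
  refine ⟨h (F x) - Lh * (cpm * (frobNorm A * (cnp * r))), ?_⟩
  rintro y ⟨s, ⟨hs1, hs2⟩, rfl⟩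
  have e1 := hhLip (F x) (F x + A.mulVec s)
  have e2 : F x - (F x + A.mulVec s) = -(A.mulVec s) := by abel
  rw [e2, pNorm_neg] at e1
  have e4 : eucNorm s ≤ cnp * r :=
    (hcnp s).trans (mul_le_mul_of_nonneg_left hs2 hcnp0)
  have e5 : eucNorm (A.mulVec s) ≤ frobNorm A * (cnp * r) :=
    (eucNorm_mulVec_le_frob A s).trans
      (mul_le_mul_of_nonneg_left e4 (Real.sqrt_nonneg _))
  have e6 : pNorm p (A.mulVec s) ≤ cpm * (frobNorm A * (cnp * r)) :=
    (hcpm _).trans (mul_le_mul_of_nonneg_left e5 hcpm0)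
  have e7 := mul_le_mul_of_nonneg_left e6 hLh
  have e8 := (abs_le.mp e1).2
  simp only []
  linarith

lemma model_inf_le {n m : ℕ} (Ω : Set (Fin n → ℝ)) (F : (Fin n → ℝ) → (Fin m → ℝ))
    (h : (Fin m → ℝ) → ℝ) (p : ℝ≥0∞) (hn : 0 < n) (hp : 1 ≤ p) {Lh cpm cnp : ℝ}
    (hLh : 0 ≤ Lh) (hcpm0 : 0 ≤ cpm) (hcnp0 : 0 ≤ cnp)
    (hhLip : ∀ z w, |h z - h w| ≤ Lh * pNorm p (z - w))
    (hcpm : ∀ z : Fin m → ℝ, pNorm p z ≤ cpm * eucNorm z)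
    (hcnp : ∀ v : Fin n → ℝ, eucNorm v ≤ cnp * pNorm p v)
    (x : Fin n → ℝ) (hx : x ∈ Ω) (A : Matrix (Fin m) (Fin n) ℝ) (r : ℝ) (hr : 0 ≤ r) :
    sInf ((fun s => h (F x + A.mulVec s)) '' {s | x + s ∈ Ω ∧ pNorm p s ≤ r}) ≤ h (F x) := by
  apply csInf_le (model_bddBelow Ω F h p hLh hcpm0 hcnp0 hhLip hcpm hcnp x A r)
  refine ⟨0, ⟨by simpa using hx, by rw [pNorm_zero hn hp]; exact hr⟩, ?_⟩
  simp [Matrix.mulVec_zero]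

end Aux

/-- Stationarity measure `ψ_{p,r}(x)`. -/
def psi {n m : ℕ} (Ω : Set (Fin n → ℝ)) (F : (Fin n → ℝ) → (Fin m → ℝ))
    (h : (Fin m → ℝ) → ℝ) (J : (Fin n → ℝ) → Matrix (Fin m) (Fin n) ℝ)
    (p : ℝ≥0∞) (r : ℝ) (x : Fin n → ℝ) : ℝ :=
  r⁻¹ * (h (F x) -
    sInf ((fun s => h (F x + (J x).mulVec s)) '' {s | x + s ∈ Ω ∧ pNorm p s ≤ r}))

/-- Approximate stationarity measure `η_{p,r}(x; A)`. -/
def eta {n m : ℕ} (Ω : Set (Fin n → ℝ)) (F : (Fin n → ℝ) → (Fin m → ℝ))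
    (h : (Fin m → ℝ) → ℝ) (p : ℝ≥0∞) (r : ℝ) (x : Fin n → ℝ)
    (A : Matrix (Fin m) (Fin n) ℝ) : ℝ :=
  r⁻¹ * (h (F x) -
    sInf ((fun s => h (F x + A.mulVec s)) '' {s | x + s ∈ Ω ∧ pNorm p s ≤ r}))

/-- The TRFD algorithm: `x`, `τ`, `Δ`, `A`, `d`, `ρ` are the iterates, finite-difference
stepsizes, trust-region radii, finite-difference Jacobian approximations, trial steps and
ratios generated by TRFD with parameters `ε, σ, α, θ, Δstar` from the point `x 0`. -/
def TRFDrun {n m : ℕ} (Ω : Set (Fin n → ℝ)) (F : (Fin n → ℝ) → (Fin m → ℝ))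
    (h : (Fin m → ℝ) → ℝ) (p : ℝ≥0∞)
    (Lh cpm cnp ε σ α θ Δstar : ℝ)
    (x : ℕ → Fin n → ℝ) (τ Δ : ℕ → ℝ) (A : ℕ → Matrix (Fin m) (Fin n) ℝ)
    (d : ℕ → Fin n → ℝ) (ρ : ℕ → ℝ) : Prop :=
  x 0 ∈ Ω ∧
  τ 0 = ε / (Lh * σ * cpm * cnp * Real.sqrt n) ∧
  τ 0 * Real.sqrt n ≤ Δ 0 ∧ Δ 0 ≤ Δstar ∧
  (∀ k, A k = fdMatrix F (x k) (τ k)) ∧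
  (∀ k,
    -- unsuccessful iteration of type I
    (eta Ω F h p Δstar (x k) (A k) < ε / 2 ∧
      x (k + 1) = x k ∧ Δ (k + 1) = Δ k ∧ τ (k + 1) = τ k / 2) ∨
    (ε / 2 ≤ eta Ω F h p Δstar (x k) (A k) ∧
      -- the trial step is feasible and achieves a `θ`-fraction of the optimal model decrease
      pNorm p (d k) ≤ Δ k ∧ x k + d k ∈ Ω ∧
      θ * (h (F (x k)) -
          sInf ((fun s => h (F (x k) + (A k).mulVec s)) ''
            {s | x k + s ∈ Ω ∧ pNorm p s ≤ Δ k})) ≤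
        h (F (x k)) - h (F (x k) + (A k).mulVec (d k)) ∧
      ρ k = (h (F (x k)) - h (F (x k + d k))) /
            (h (F (x k)) - h (F (x k) + (A k).mulVec (d k))) ∧
      -- successful iteration
      ((α ≤ ρ k ∧ x (k + 1) = x k + d k ∧ Δ (k + 1) = min (2 * Δ k) Δstar ∧
          τ (k + 1) = τ k) ∨
      -- unsuccessful iteration of type II
       (ρ k < α ∧ τ k * Real.sqrt n ≤ Δ k / 2 ∧
          x (k + 1) = x k ∧ Δ (k + 1) = Δ k / 2 ∧ τ (k + 1) = τ k) ∨
      -- unsuccessful iteration of type III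
       (ρ k < α ∧ Δ k / 2 < τ k * Real.sqrt n ∧
          x (k + 1) = x k ∧ Δ (k + 1) = Δ k / 2 ∧ τ (k + 1) = τ k / 2))))

set_option maxHeartbeats 2000000 in
/-- Lemma 3.10: η bounds the scaled functional residual on non-U¹ iterations. -/
theorem stmt15
    {n m : ℕ} (hn : 1 ≤ n) (hm : 1 ≤ m) (p : ℝ≥0∞) (hp : 1 ≤ p)
    (Ω : Set (Fin n → ℝ)) (hΩne : Ω.Nonempty) (hΩcl : IsClosed Ω) (hΩcv : Convex ℝ Ω)
    (F : (Fin n → ℝ) → (Fin m → ℝ)) (J : (Fin n → ℝ) → Matrix (Fin m) (Fin n) ℝ)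
    (hJ : ∀ y, HasFDerivAt F (LinearMap.toContinuousLinearMap (Matrix.mulVecLin (J y))) y)
    (LJ : ℝ) (hLJ : 0 < LJ)
    (hJLip : ∀ y z, opNorm2 (J y - J z) ≤ LJ * eucNorm (y - z))
    (h : (Fin m → ℝ) → ℝ) (hconv : ConvexOn ℝ Set.univ h)
    (Lh : ℝ) (hLh : 0 < Lh)
    (hhLip : ∀ z w, |h z - h w| ≤ Lh * pNorm p (z - w))
    (cnp cpm : ℝ) (hcnp1 : 1 ≤ cnp) (hcpm1 : 1 ≤ cpm)
    (hcnp : ∀ v : Fin n → ℝ, eucNorm v ≤ cnp * pNorm p v)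
    (hcpm : ∀ z : Fin m → ℝ, pNorm p z ≤ cpm * eucNorm z)
    (ε σ α θ Δstar : ℝ) (hε : 0 < ε) (hσ : 0 < σ)
    (hα0 : 0 < α) (hα1 : α < 1) (hθ0 : 0 < θ) (hθ1 : θ ≤ 1)
    (x : ℕ → Fin n → ℝ) (τ Δ : ℕ → ℝ) (A : ℕ → Matrix (Fin m) (Fin n) ℝ)
    (d : ℕ → Fin n → ℝ) (ρ : ℕ → ℝ)
    (hrun : TRFDrun Ω F h p Lh cpm cnp ε σ α θ Δstar x τ Δ A d ρ)
    (hFconv : ∀ i, ConvexOn ℝ Set.univ (fun y => F y i))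
    (hmono : ∀ u v : Fin m → ℝ, (∀ i, u i ≤ v i) → h u ≤ h v)
    (xstar : Fin n → ℝ) (hxstarΩ : xstar ∈ Ω)
    (hxstarmin : ∀ y ∈ Ω, h (F xstar) ≤ h (F y))
    (D₀ : ℝ) (hD₀ : ∀ y ∈ Ω, h (F y) ≤ h (F (x 0)) → pNorm p (y - xstar) ≤ D₀)
    (hΔstarD₀ : D₀ ≤ Δstar)
    :
    ∀ k : ℕ, ε / 2 ≤ eta Ω F h p Δstar (x k) (A k) →
      (h (F (x k)) - h (F xstar)) / ((LJ / σ + 1) * Δstar) ≤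
        eta Ω F h p Δstar (x k) (A k) := by
  obtain ⟨hx0, hτ0, hΔ0lo, hΔ0hi, hA, hstep⟩ := hrun
  have hnR : (0:ℝ) < n := by exact_mod_cast hn
  have hsq : 0 < Real.sqrt n := Real.sqrt_pos.mpr hnR
  have hcnp0 : (0:ℝ) < cnp := lt_of_lt_of_le one_pos hcnp1
  have hcpm0 : (0:ℝ) < cpm := lt_of_lt_of_le one_pos hcpm1
  have hτ0pos : 0 < τ 0 := by
    rw [hτ0]
    exact div_pos hε (mul_pos (mul_pos (mul_pos (mul_pos hLh hσ) hcpm0) hcnp0) hsq)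
  have hΔstar_pos : 0 < Δstar :=
    lt_of_lt_of_le (lt_of_lt_of_le (mul_pos hτ0pos hsq) hΔ0lo) hΔ0hi
  have hbdd := fun (x' : Fin n → ℝ) (A' : Matrix (Fin m) (Fin n) ℝ) (r : ℝ) =>
    model_bddBelow Ω F h p hLh.le hcpm0.le hcnp0.le hhLip hcpm hcnp x' A' r
  have hinf := fun (x' : Fin n → ℝ) (hx' : x' ∈ Ω) (A' : Matrix (Fin m) (Fin n) ℝ)
      (r : ℝ) (hr : 0 ≤ r) =>
    model_inf_le Ω F h p hn hp hLh.le hcpm0.le hcnp0.le hhLip hcpm hcnp x' hx' A' r hr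
  -- invariants along the iterations
  have inv : ∀ k, x k ∈ Ω ∧ 0 < τ k ∧ τ k ≤ τ 0 ∧ 0 < Δ k ∧ Δ k ≤ Δstar ∧
      h (F (x k)) ≤ h (F (x 0)) := by
    intro k
    induction k with
    | zero =>
        exact ⟨hx0, hτ0pos, le_refl _,
          lt_of_lt_of_le (mul_pos hτ0pos hsq) hΔ0lo, hΔ0hi, le_refl _⟩
    | succ k ih =>
        obtain ⟨hxk, hτk, hτk0, hΔk, hΔkstar, hfk⟩ := ih
        rcases hstep k with ⟨_, hx', hΔ', hτ'⟩ | ⟨hη, hd1, hd2, hθd, hρ, hcase⟩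
        · rw [hx', hΔ', hτ']
          exact ⟨hxk, by linarith, by linarith, hΔk, hΔkstar, hfk⟩
        · rcases hcase with ⟨hαρ, hx', hΔ', hτ'⟩ | ⟨_, _, hx', hΔ', hτ'⟩ |
            ⟨_, _, hx', hΔ', hτ'⟩
          · -- successful iteration
            have hinfle := hinf (x k) hxk (A k) (Δ k) hΔk.le
            have hM0 : 0 ≤ h (F (x k)) - h (F (x k) + (A k).mulVec (d k)) :=
              le_trans (mul_nonneg hθ0.le (by linarith)) hθd
            have hMpos : 0 < h (F (x k)) - h (F (x k) + (A k).mulVec (d k)) := by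
              rcases hM0.lt_or_eq with hlt | heq
              · exact hlt
              · exfalso
                rw [hρ, ← heq, div_zero] at hαρ
                linarith
            have hdec : h (F (x k + d k)) ≤ h (F (x k)) := by
              rw [hρ, le_div_iff₀ hMpos] at hαρ
              nlinarith
            rw [hx', hΔ', hτ']
            exact ⟨hd2, hτk, hτk0, lt_min (by linarith) hΔstar_pos,
              min_le_right _ _, le_trans hdec hfk⟩
          · rw [hx', hΔ', hτ']
            exact ⟨hxk, hτk, hτk0, by linarith, by linarith, hfk⟩
          · rw [hx', hΔ', hτ']
            exact ⟨hxk, by linarith, by linarith, by linarith, by linarith, hfk⟩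
  -- main argument
  intro k hη
  obtain ⟨hxk, hτk, hτk0, hΔk, hΔkstar, hfk⟩ := inv k
  set s : Fin n → ℝ := xstar - x k with hs
  have hs_in : x k + s = xstar := by rw [hs]; abel
  have hs_p : pNorm p s ≤ Δstar := by
    have h1 := hD₀ (x k) hxk hfk
    have h2 : pNorm p s = pNorm p (x k - xstar) := by
      rw [show s = -(x k - xstar) by rw [hs]; abel, pNorm_neg]
    linarith
  set I := sInf ((fun s => h (F (x k) + (A k).mulVec s)) ''
    {s | x k + s ∈ Ω ∧ pNorm p s ≤ Δstar}) with hI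
  have hEdef : eta Ω F h p Δstar (x k) (A k) = Δstar⁻¹ * (h (F (x k)) - I) := rfl
  set E := eta Ω F h p Δstar (x k) (A k) with hE
  have hIle : I ≤ h (F (x k) + (A k).mulVec s) := by
    apply csInf_le (hbdd (x k) (A k) Δstar)
    exact ⟨s, ⟨by rw [hs_in]; exact hxstarΩ, hs_p⟩, rfl⟩
  -- tangent bound
  have htan : h (F (x k) + (J (x k)).mulVec s) ≤ h (F xstar) := by
    apply hmono
    intro i
    have := tangent_le hJ hFconv (x k) s i
    rw [hs_in] at this
    simpa using this
  -- Lipschitz split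
  set P := pNorm p ((A k - J (x k)).mulVec s) with hP
  have hlip2 : h (F (x k) + (A k).mulVec s) ≤ h (F (x k) + (J (x k)).mulVec s) + Lh * P := by
    have e1 := hhLip (F (x k) + (A k).mulVec s) (F (x k) + (J (x k)).mulVec s)
    have e2 : (F (x k) + (A k).mulVec s) - (F (x k) + (J (x k)).mulVec s)
        = (A k - J (x k)).mulVec s := by
      rw [Matrix.sub_mulVec]; abel
    rw [e2] at e1
    have := (abs_le.mp e1).2
    linarith
  -- finite-difference error bound
  have herr2 : eucNorm ((A k - J (x k)).mulVec s) ≤ (LJ * τ k / 2) * (Real.sqrt n * eucNorm s) := by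
    have hdecomp : (A k - J (x k)).mulVec s
        = ∑ j, s j • (fun i => (A k - J (x k)) i j) := by
      funext i
      simp [Matrix.mulVec, dotProduct, Finset.sum_apply, mul_comm]
    rw [hdecomp]
    calc eucNorm (∑ j, s j • (fun i => (A k - J (x k)) i j))
        ≤ ∑ j, eucNorm (s j • (fun i => (A k - J (x k)) i j)) := eucNorm_sum_le _ _
      _ = ∑ j, |s j| * eucNorm (fun i => (A k - J (x k)) i j) := by
          simp only [eucNorm_smul]
      _ ≤ ∑ j, |s j| * (LJ * τ k / 2) := by
          apply Finset.sum_le_sum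
          intro j _
          apply mul_le_mul_of_nonneg_left _ (abs_nonneg _)
          have := fd_col_err hJ hFconv hLJ hJLip (x k) hτk j
          rw [hA k]
          simpa [Matrix.sub_apply] using this
      _ = (LJ * τ k / 2) * ∑ j, |s j| := by rw [← Finset.sum_mul]; ring
      _ ≤ (LJ * τ k / 2) * (Real.sqrt n * eucNorm s) := by
          apply mul_le_mul_of_nonneg_left (sum_abs_le_sqrt s)
          positivity
  have heucs : eucNorm s ≤ cnp * Δstar :=
    (hcnp s).trans (mul_le_mul_of_nonneg_left hs_p hcnp0.le)
  have hPb : P ≤ cpm * ((LJ * τ k / 2) * (Real.sqrt n * (cnp * Δstar))) := by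
    refine (hcpm _).trans ?_
    apply mul_le_mul_of_nonneg_left _ hcpm0.le
    refine herr2.trans ?_
    apply mul_le_mul_of_nonneg_left _ (by positivity)
    exact mul_le_mul_of_nonneg_left heucs hsq.le
  -- arithmetic on the stepsize
  have hτ0id : τ 0 * (Lh * σ * cpm * cnp * Real.sqrt n) = ε := by
    rw [hτ0]
    field_simp
  have hfac : LJ / σ * (ε / 2) * Δstar
      = (LJ * Lh * cpm * cnp * Real.sqrt n * Δstar / 2) * τ 0 := by
    rw [← hτ0id]
    field_simp
  have hCpos : (0:ℝ) ≤ LJ * Lh * cpm * cnp * Real.sqrt n * Δstar / 2 := by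
    apply div_nonneg _ (by norm_num)
    exact mul_nonneg (mul_nonneg (mul_nonneg (mul_nonneg
      (mul_nonneg hLJ.le hLh.le) hcpm0.le) hcnp0.le) hsq.le) hΔstar_pos.le
  have hLhP : Lh * P ≤ LJ / σ * (ε / 2) * Δstar := by
    have h1 : Lh * P ≤ Lh * (cpm * ((LJ * τ k / 2) * (Real.sqrt n * (cnp * Δstar)))) :=
      mul_le_mul_of_nonneg_left hPb hLh.le
    have h2 : Lh * (cpm * ((LJ * τ k / 2) * (Real.sqrt n * (cnp * Δstar))))
        = (LJ * Lh * cpm * cnp * Real.sqrt n * Δstar / 2) * τ k := by ring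
    have h3 := mul_le_mul_of_nonneg_left hτk0 hCpos
    rw [hfac]
    linarith
  have hησ : LJ / σ * (ε / 2) * Δstar ≤ LJ / σ * Δstar * E := by
    have h4 : (0:ℝ) ≤ LJ / σ * Δstar :=
      mul_nonneg (div_nonneg hLJ.le hσ.le) hΔstar_pos.le
    have := mul_le_mul_of_nonneg_left hη h4
    calc LJ / σ * (ε / 2) * Δstar = LJ / σ * Δstar * (ε/2) := by ring
      _ ≤ LJ / σ * Δstar * E := this
  have hfkI : h (F (x k)) - I = Δstar * E := by
    rw [hEdef]
    field_simp
  have hchain : h (F (x k)) - h (F xstar) ≤ Δstar * E + LJ / σ * Δstar * E := by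
    have : h (F (x k)) - h (F xstar) ≤ (h (F (x k)) - I) + Lh * P := by linarith
    linarith
  rw [div_le_iff₀ (mul_pos (by positivity) hΔstar_pos)]
  nlinarith
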